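/- arXiv:2603.28036 — 2 statements merged into one kernel-verified Lean document; each statement's English description precedes it below -/
import Mathlib

section
/- Let L be any of the modal systems K_nD, D_nD, T_nD, K45_nD, KD45_nD, S5_nD. For every finite P ⊆ 𝒫, every atom p ∈ P, every L-satisfiable formula φ over P, and every L-satisfiable formula ψ over P∖{p}: if ψ is a result of forgetting p in φ in L (dforget_L(φ,p) ≡_L ψ), then ψ is a uniform interpolant of φ in L over P∖{p}. Consequently, if L is closed under forgetting, then L has the uniform interpolation property. -/
/-!
Common framework: multi-agent epistemic modal logic with distributed knowledge.
Agents are `Fin n`, atoms are natural numbers.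
-/

namespace DKLogic

/-- Formulas of the language `L_D`: atoms, negation, conjunction, disjunction and the
distributed-knowledge modality `D_B` for nonempty sets `B` of agents (together with the
constants `⊤`/`⊥`, which the paper uses as the empty conjunction/disjunction). -/
inductive Formula (n : ℕ) : Type
  | top : Formula n
  | bot : Formula n
  | atom : ℕ → Formula n
  | neg : Formula n → Formula n
  | and : Formula n → Formula n → Formula n
  | or : Formula n → Formula n → Formula n
  | D : {B : Finset (Fin n) // B.Nonempty} → Formula n → Formula n

namespace Formula

/-- Modal depth of a formula. -/
def depth {n : ℕ} : Formula n → ℕ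
  | top => 0
  | bot => 0
  | atom _ => 0
  | neg φ => depth φ
  | and φ ψ => max (depth φ) (depth ψ)
  | or φ ψ => max (depth φ) (depth ψ)
  | D _ φ => depth φ + 1

/-- The atoms occurring in a formula. -/
def atoms {n : ℕ} : Formula n → Finset ℕ
  | top => ∅
  | bot => ∅
  | atom q => {q}
  | neg φ => atoms φ
  | and φ ψ => atoms φ ∪ atoms ψ
  | or φ ψ => atoms φ ∪ atoms ψ
  | D _ φ => atoms φ

end Formula

/-- A Kripke model over world type `W` with `n` agents. -/
structure KModel (n : ℕ) (W : Type) where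
  R : Fin n → W → W → Prop
  V : W → Set ℕ

/-- The distributed accessibility relation `R_B = ⋂_{i ∈ B} R_i`. -/
def KModel.RB {n : ℕ} {W : Type} (M : KModel n W) (B : Finset (Fin n)) (s t : W) : Prop :=
  ∀ i ∈ B, M.R i s t

/-- Satisfaction. -/
def Sat {n : ℕ} {W : Type} (M : KModel n W) : W → Formula n → Prop
  | _, .top => True
  | _, .bot => False
  | s, .atom q => q ∈ M.V s
  | s, .neg φ => ¬ Sat M s φ
  | s, .and φ ψ => Sat M s φ ∧ Sat M s ψ
  | s, .or φ ψ => Sat M s φ ∨ Sat M s ψ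
  | s, .D B φ => ∀ t : W, M.RB B.1 s t → Sat M t φ

/-- Seriality of a relation. -/
def Serial {W : Type} (R : W → W → Prop) : Prop := ∀ x, ∃ y, R x y

/-- Euclideanness of a relation. -/
def Euclidean {W : Type} (R : W → W → Prop) : Prop := ∀ x y z, R x y → R x z → R y z

/-- The six modal systems. -/
inductive MSys : Type
  | K | D | T | K45 | KD45 | S5

/-- `L`-models: frame conditions on each accessibility relation for each system. -/
def IsModel {n : ℕ} {W : Type} : MSys → KModel n W → Prop
  | .K, _ => True
  | .D, M => ∀ i, Serial (M.R i)
  | .T, M => ∀ i, Reflexive (M.R i)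
  | .K45, M => ∀ i, Transitive (M.R i) ∧ Euclidean (M.R i)
  | .KD45, M => ∀ i, Serial (M.R i) ∧ Transitive (M.R i) ∧ Euclidean (M.R i)
  | .S5, M => ∀ i, Reflexive (M.R i) ∧ Transitive (M.R i) ∧ Euclidean (M.R i)

/-- Semantic consequence over `L`-models. -/
def Entails {n : ℕ} (L : MSys) (φ ψ : Formula n) : Prop :=
  ∀ (W : Type) (M : KModel n W), IsModel L M → ∀ s : W, Sat M s φ → Sat M s ψ

/-- Semantic equivalence over `L`-models. -/
def EquivL {n : ℕ} (L : MSys) (φ ψ : Formula n) : Prop :=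
  Entails L φ ψ ∧ Entails L ψ φ

/-- `L`-satisfiability. -/
def SatL {n : ℕ} (L : MSys) (φ : Formula n) : Prop :=
  ∃ (W : Type) (M : KModel n W) (s : W), IsModel L M ∧ Sat M s φ

/-- Collective `p`-bisimulation between two pointed models. -/
def CollPBisim {n : ℕ} {W W' : Type} (M : KModel n W) (s : W) (M' : KModel n W') (s' : W')
    (p : ℕ) : Prop :=
  ∃ ρ : W → W' → Prop, ρ s s' ∧
    ∀ u u', ρ u u' →
      ((∀ q : ℕ, q ≠ p → (q ∈ M.V u ↔ q ∈ M'.V u')) ∧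
       (∀ B : Finset (Fin n), B.Nonempty → ∀ v, M.RB B u v → ∃ v', M'.RB B u' v' ∧ ρ v v') ∧
       (∀ B : Finset (Fin n), B.Nonempty → ∀ v', M'.RB B u' v' → ∃ v, M.RB B u v ∧ ρ v v'))

/-- `ψ` is a result of forgetting `p` in `φ` in system `L`
(written `dforget_L(φ,p) ≡_L ψ` in the paper). -/
def IsForget {n : ℕ} (L : MSys) (φ : Formula n) (p : ℕ) (ψ : Formula n) : Prop :=
  ψ.atoms ⊆ φ.atoms.erase p ∧
  (∀ (W W' : Type) (M : KModel n W) (M' : KModel n W') (s : W) (s' : W'),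
      IsModel L M → IsModel L M' → Sat M s φ → CollPBisim M s M' s' p → Sat M' s' ψ) ∧
  (∀ (W' : Type) (M' : KModel n W') (s' : W'),
      IsModel L M' → Sat M' s' ψ →
      ∃ (W : Type) (M : KModel n W) (s : W), IsModel L M ∧ Sat M s φ ∧ CollPBisim M s M' s' p)

/-- `L` is closed under forgetting: `dforget_L(φ,p)` exists (as an `L`-satisfiable formula)
for every `L`-satisfiable `φ` and every atom `p`. -/
def ClosedUnderForgetting {n : ℕ} (L : MSys) : Prop :=
  ∀ (φ : Formula n) (p : ℕ), SatL L φ → ∃ ψ : Formula n, SatL L ψ ∧ IsForget L φ p ψ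

/-- `ψ` is a uniform interpolant of `φ` in `L` over `P \ {p}`. -/
def IsUI {n : ℕ} (L : MSys) (P : Finset ℕ) (p : ℕ) (φ ψ : Formula n) : Prop :=
  SatL L ψ ∧ ψ.atoms ⊆ P.erase p ∧
  ∀ χ : Formula n, p ∉ χ.atoms → (Entails L φ χ ↔ Entails L ψ χ)

/-- The uniform interpolation property for the system `L`. -/
def HasUIP {n : ℕ} (L : MSys) : Prop :=
  ∀ (P : Finset ℕ) (p : ℕ) (φ : Formula n),
    p ∈ P → φ.atoms ⊆ P → SatL L φ → ∃ ψ : Formula n, IsUI L P p φ ψ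

/-! ### Canonical formulas -/

/-- Big conjunction of a list of formulas (`⊤` for the empty list). -/
def bigAnd {n : ℕ} : List (Formula n) → Formula n
  | [] => .top
  | φ :: l => .and φ (bigAnd l)

/-- Big disjunction of a list of formulas (`⊥` for the empty list). -/
def bigOr {n : ℕ} : List (Formula n) → Formula n
  | [] => .bot
  | φ :: l => .or φ (bigOr l)

/-- An injective numerical code of formulas, used to fix a canonical ordering. -/
def fcode {n : ℕ} : Formula n → ℕ
  | .top => Nat.pair 0 0
  | .bot => Nat.pair 1 0
  | .atom q => Nat.pair 2 q
  | .neg φ => Nat.pair 3 (fcode φ)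
  | .and φ ψ => Nat.pair 4 (Nat.pair (fcode φ) (fcode ψ))
  | .or φ ψ => Nat.pair 5 (Nat.pair (fcode φ) (fcode ψ))
  | .D B φ => Nat.pair 6 (Nat.pair (B.1.sum fun i => 2 ^ (i : ℕ)) (fcode φ))

/-- Insert a formula into a strictly `fcode`-sorted list (dropping duplicates). -/
def insertF {n : ℕ} (φ : Formula n) : List (Formula n) → List (Formula n)
  | [] => [φ]
  | ψ :: l =>
      if fcode φ < fcode ψ then φ :: ψ :: l
      else if fcode φ = fcode ψ then ψ :: l
      else ψ :: insertF φ l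

/-- The canonical (sorted, duplicate-free) list representing the set of formulas in `l`. -/
def normList {n : ℕ} (l : List (Formula n)) : List (Formula n) := l.foldr insertF []

/-- The minterm of `P` that is positive exactly on `S`. -/
def minterm {n : ℕ} (P S : Finset ℕ) : Formula n :=
  bigAnd ((P.sort (· ≤ ·)).map fun q =>
    if q ∈ S then Formula.atom q else Formula.neg (Formula.atom q))

/-- The subset of `Fin n` whose characteristic bits are those of `m`. -/
def natToFinset (n m : ℕ) : Finset (Fin n) :=
  Finset.univ.filter fun i => m.testBit (i : ℕ)

/-- A canonical enumeration of all nonempty subsets of the agent set. -/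
def neSubsets (n : ℕ) : List {B : Finset (Fin n) // B.Nonempty} :=
  ((List.range (2 ^ n)).map (natToFinset n)).filterMap fun B =>
    if h : B.Nonempty then some ⟨B, h⟩ else none

/-- `∇_B Φ = D_B (⋁Φ) ∧ ⋀_{φ ∈ Φ} ¬ D_B ¬ φ`. -/
def nabla {n : ℕ} (B : {B : Finset (Fin n) // B.Nonempty}) (Φ : List (Formula n)) : Formula n :=
  Formula.and (Formula.D B (bigOr Φ))
    (bigAnd (Φ.map fun φ => Formula.neg (Formula.D B (Formula.neg φ))))

/-- Underlying data of a d-canonical formula: a set of (positive) atoms together with,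
for every set `B` of agents, a list of successor data. -/
inductive CData (n : ℕ) : Type
  | mk (S : Finset ℕ) (succ : Finset (Fin n) → List (CData n)) : CData n

/-- The positive-atom component. -/
def CData.S {n : ℕ} : CData n → Finset ℕ
  | mk S _ => S

/-- The `B`-successor data. -/
def CData.succ {n : ℕ} : CData n → Finset (Fin n) → List (CData n)
  | mk _ f => f

/-- The d-canonical formula of depth `k` over `P` determined by the data `d`:
`δ_0 ∧ ⋀_{B} ∇_B Φ_B`. -/
def toFormula {n : ℕ} (P : Finset ℕ) : ℕ → CData n → Formula n
  | 0, d => minterm P (d.S ∩ P)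
  | (k+1), d =>
      Formula.and (minterm P (d.S ∩ P))
        (bigAnd ((neSubsets n).map fun B =>
          nabla B (normList ((d.succ B.1).map fun c => toFormula P k c))))

/-- `D^P_k`: the set of d-canonical formulas of depth `k` over `P`. -/
def DP {n : ℕ} (P : Finset ℕ) (k : ℕ) : Set (Formula n) := Set.range (toFormula P k)

/-- `R_B(δ)` for `δ` the level-`k` canonical formula with data `d`:
the set of `B`-successor canonical formulas (of level `k - 1`). -/
def RBset {n : ℕ} (P : Finset ℕ) (k : ℕ) (d : CData n) (B : Finset (Fin n)) :
    Set (Formula n) :=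
  {φ | ∃ c ∈ d.succ B, φ = toFormula P (k - 1) c}

/-- One pruning step `δ ↦ δ^↓` on data (first argument: the level of the input). -/
def downD {n : ℕ} : ℕ → CData n → CData n
  | 0, d => d
  | 1, d => CData.mk d.S (fun _ => [])
  | (k+2), d => CData.mk d.S (fun B => (d.succ B).map fun c => downD (k+1) c)

/-- `l`-fold pruning `δ ↦ δ^{↓l}` on data (first argument: the level of the input). -/
def downIter {n : ℕ} : ℕ → ℕ → CData n → CData n
  | _, 0, d => d
  | k, (l+1), d => downIter (k-1) l (downD k d)

/-- Truncation `δ ↦ δ^{↑l}` on data (first argument: the level of the input). -/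
def upD {n : ℕ} : ℕ → ℕ → CData n → CData n
  | _, 0, d => CData.mk d.S (fun _ => [])
  | 0, (_+1), d => d
  | (k+1), (l+1), d => CData.mk d.S (fun B => (d.succ B).map fun c => upD k l c)

/-- The canonical formula `δ` of level `k` with data `d`. -/
def cf {n : ℕ} (P : Finset ℕ) (k : ℕ) (d : CData n) : Formula n := toFormula P k d

/-- `δ^{↓l}` (a canonical formula of level `k - l`). -/
def cfDown {n : ℕ} (P : Finset ℕ) (k l : ℕ) (d : CData n) : Formula n :=
  toFormula P (k - l) (downIter k l d)

/-- `δ^{↑l}` (a canonical formula of level `min k l`). -/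
def cfUp {n : ℕ} (P : Finset ℕ) (k l : ℕ) (d : CData n) : Formula n :=
  toFormula P (min k l) (upD k l d)

/-- Literal elimination: `φ^p` replaces every occurrence of `¬p` by `⊤` and subsequently
every remaining occurrence of `p` by `⊤`. -/
def elim {n : ℕ} (p : ℕ) : Formula n → Formula n
  | .top => .top
  | .bot => .bot
  | .atom q => if q = p then .top else .atom q
  | .neg (.atom q) => if q = p then .top else .neg (.atom q)
  | .neg φ => .neg (elim p φ)
  | .and φ ψ => .and (elim p φ) (elim p ψ)
  | .or φ ψ => .or (elim p φ) (elim p ψ)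
  | .D B φ => .D B (elim p φ)


/-- A collective `p`-bisimulation preserves truth of formulas not containing `p`. -/
lemma bisim_invariance {n : ℕ} {W W' : Type} (M : KModel n W) (M' : KModel n W') (p : ℕ)
    (ρ : W → W' → Prop)
    (hρ : ∀ u u', ρ u u' →
      ((∀ q : ℕ, q ≠ p → (q ∈ M.V u ↔ q ∈ M'.V u')) ∧
       (∀ B : Finset (Fin n), B.Nonempty → ∀ v, M.RB B u v → ∃ v', M'.RB B u' v' ∧ ρ v v') ∧
       (∀ B : Finset (Fin n), B.Nonempty → ∀ v', M'.RB B u' v' → ∃ v, M.RB B u v ∧ ρ v v'))) :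
    ∀ (χ : Formula n), p ∉ χ.atoms → ∀ u u', ρ u u' → (Sat M u χ ↔ Sat M' u' χ) := by
  intro χ
  induction χ with
  | top => intro _ u u' _; simp [Sat]
  | bot => intro _ u u' _; simp [Sat]
  | atom q =>
      intro hp u u' h
      have hq : q ≠ p := by
        simp [Formula.atoms] at hp; exact fun e => hp e.symm
      exact (hρ u u' h).1 q hq
  | neg φ ih =>
      intro hp u u' h
      simp only [Sat]
      exact not_congr (ih hp u u' h)
  | and φ ψ ihφ ihψ =>
      intro hp u u' h
      simp only [Formula.atoms, Finset.mem_union, not_or] at hp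
      simp only [Sat]
      exact and_congr (ihφ hp.1 u u' h) (ihψ hp.2 u u' h)
  | or φ ψ ihφ ihψ =>
      intro hp u u' h
      simp only [Formula.atoms, Finset.mem_union, not_or] at hp
      simp only [Sat]
      exact or_congr (ihφ hp.1 u u' h) (ihψ hp.2 u u' h)
  | D B φ ih =>
      intro hp u u' h
      have hp' : p ∉ φ.atoms := hp
      constructor
      · intro hs t' ht'
        obtain ⟨v, hv, hρv⟩ := (hρ u u' h).2.2 B.1 B.2 t' ht'
        exact (ih hp' v t' hρv).mp (hs v hv)
      · intro hs t ht
        obtain ⟨v', hv', hρv⟩ := (hρ u u' h).2.1 B.1 B.2 t ht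
        exact (ih hp' t v' hρv).mpr (hs v' hv')

/-- The identity relation is a collective `p`-bisimulation. -/
lemma collPBisim_refl {n : ℕ} {W : Type} (M : KModel n W) (s : W) (p : ℕ) :
    CollPBisim M s M s p := by
  refine ⟨Eq, rfl, ?_⟩
  rintro u u' rfl
  exact ⟨fun q _ => Iff.rfl,
    fun B _ v hv => ⟨v, hv, rfl⟩,
    fun B _ v' hv' => ⟨v', hv', rfl⟩⟩

/-- a result of forgetting is a uniform interpolant; consequently
closure under forgetting implies the uniform interpolation property. -/
theorem forget_is_uniform_interpolant {n : ℕ} (L : MSys) :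
    (∀ (P : Finset ℕ) (p : ℕ) (φ ψ : Formula n),
        p ∈ P → φ.atoms ⊆ P → SatL L φ →
        ψ.atoms ⊆ P.erase p → SatL L ψ →
        IsForget L φ p ψ → IsUI L P p φ ψ) ∧
    (ClosedUnderForgetting (n := n) L → HasUIP (n := n) L) := by
  have main : ∀ (P : Finset ℕ) (p : ℕ) (φ ψ : Formula n),
      p ∈ P → φ.atoms ⊆ P → SatL L φ →
      ψ.atoms ⊆ P.erase p → SatL L ψ →
      IsForget L φ p ψ → IsUI L P p φ ψ := by
    intro P p φ ψ _ _ _ hψP hsψ hforget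
    obtain ⟨hatoms, hforth, hback⟩ := hforget
    refine ⟨hsψ, hψP, ?_⟩
    intro χ hpχ
    constructor
    · -- φ ⊨ χ → ψ ⊨ χ
      intro hφχ W' M' hM' s' hs'
      obtain ⟨W, M, s, hM, hφ, ρ, hρs, hρ⟩ := hback W' M' s' hM' hs'
      have hχ : Sat M s χ := hφχ W M hM s hφ
      exact (bisim_invariance M M' p ρ hρ χ hpχ s s' hρs).mp hχ
    · -- ψ ⊨ χ → φ ⊨ χ
      intro hψχ W M hM s hφ
      have hψ : Sat M s ψ := hforth W W M M s s hM hM hφ (collPBisim_refl M s p)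
      exact hψχ W M hM s hψ
  refine ⟨main, ?_⟩
  intro hcl P p φ hpP hφP hsφ
  obtain ⟨ψ, hsψ, hforget⟩ := hcl φ p hsφ
  have hψP : ψ.atoms ⊆ P.erase p :=
    hforget.1.trans (Finset.erase_subset_erase p hφP)
  exact ⟨ψ, main P p φ ψ hpP hφP hsφ hψP hsψ hforget⟩

end DKLogic
end

section
/- (Dichotomy for d-canonical formulas) Let L be any of the modal systems K_nD, D_nD, T_nD, K45_nD, KD45_nD, S5_nD, let P ⊆ 𝒫 be finite, k ∈ ℕ, and δ ∈ D^P_k(L). Let φ be a formula of L_D with modal depth at most k and all of whose atoms lie in P. Then either δ ⊨_L φ or δ ⊨_L ¬φ. -/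
/-!
Common framework: multi-agent epistemic modal logic with distributed knowledge.
Agents are `Fin n`, atoms are natural numbers.
-/

namespace DKLogic

/-! ### Auxiliary lemmas for the dichotomy theorem -/

lemma sat_bigAnd {n : ℕ} {W : Type} {M : KModel n W} {s : W} {l : List (Formula n)} :
    Sat M s (bigAnd l) ↔ ∀ φ ∈ l, Sat M s φ := by
  induction l with
  | nil => simp [bigAnd, Sat]
  | cons a l ih => simp [bigAnd, Sat, ih]

lemma sat_bigOr {n : ℕ} {W : Type} {M : KModel n W} {s : W} {l : List (Formula n)} :
    Sat M s (bigOr l) ↔ ∃ φ ∈ l, Sat M s φ := by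
  induction l with
  | nil => simp [bigOr, Sat]
  | cons a l ih => simp [bigOr, Sat, ih]

lemma mem_insertF {n : ℕ} {φ a : Formula n} {l : List (Formula n)}
    (h : a ∈ insertF φ l) : a = φ ∨ a ∈ l := by
  induction l with
  | nil => simpa [insertF] using h
  | cons b l ih =>
    rw [insertF] at h
    by_cases h1 : fcode φ < fcode b
    · rw [if_pos h1] at h
      rcases List.mem_cons.1 h with h | h
      · exact Or.inl h
      · exact Or.inr h
    · rw [if_neg h1] at h
      by_cases h2 : fcode φ = fcode b
      · rw [if_pos h2] at h
        exact Or.inr h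
      · rw [if_neg h2] at h
        rcases List.mem_cons.1 h with h | h
        · exact Or.inr (List.mem_cons.2 (Or.inl h))
        · rcases ih h with h | h
          · exact Or.inl h
          · exact Or.inr (List.mem_cons.2 (Or.inr h))

lemma mem_normList {n : ℕ} {a : Formula n} {l : List (Formula n)}
    (h : a ∈ normList l) : a ∈ l := by
  induction l with
  | nil => simp [normList] at h
  | cons b l ih =>
    have h' : a ∈ insertF b (normList l) := h
    rcases mem_insertF h' with h | h
    · simp [h]
    · exact List.mem_cons_of_mem _ (ih h)

lemma sat_minterm {n : ℕ} {W : Type} {M : KModel n W} {s : W} {P S0 : Finset ℕ}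
    (h : Sat M s (minterm P S0)) : ∀ q ∈ P, (q ∈ M.V s ↔ q ∈ S0) := by
  intro q hq
  rw [minterm, sat_bigAnd] at h
  have hmem : (if q ∈ S0 then Formula.atom (n := n) q else Formula.neg (Formula.atom q)) ∈
      (P.sort (· ≤ ·)).map fun q =>
        if q ∈ S0 then Formula.atom (n := n) q else Formula.neg (Formula.atom q) :=
    List.mem_map.2 ⟨q, (Finset.mem_sort _).2 hq, rfl⟩
  have := h _ hmem
  by_cases hqS : q ∈ S0 <;> simp [hqS, Sat] at this <;> simp [hqS, this]

lemma natToFinset_surj {n : ℕ} (B : Finset (Fin n)) :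
    ∃ m < 2 ^ n, natToFinset n m = B := by
  have hinj : Function.Injective (fun m : Fin (2 ^ n) => natToFinset n m.1) := by
    intro m m' hmm
    apply Fin.ext
    apply Nat.eq_of_testBit_eq
    intro j
    by_cases hj : j < n
    · have hmm' : natToFinset n m.1 = natToFinset n m'.1 := hmm
      have : (⟨j, hj⟩ : Fin n) ∈ natToFinset n m.1 ↔ (⟨j, hj⟩ : Fin n) ∈ natToFinset n m'.1 := by
        rw [hmm']
      simpa [natToFinset] using this
    · have h1 : Nat.testBit m.1 j = false :=
        Nat.testBit_lt_two_pow (lt_of_lt_of_le m.2 (Nat.pow_le_pow_right (by norm_num) (le_of_not_gt hj)))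
      have h2 : Nat.testBit m'.1 j = false :=
        Nat.testBit_lt_two_pow (lt_of_lt_of_le m'.2 (Nat.pow_le_pow_right (by norm_num) (le_of_not_gt hj)))
      rw [h1, h2]
  have hcard : Fintype.card (Fin (2 ^ n)) = Fintype.card (Finset (Fin n)) := by
    simp [Fintype.card_finset]
  have hsurj : Function.Surjective (fun m : Fin (2 ^ n) => natToFinset n m.1) :=
    ((Fintype.bijective_iff_injective_and_card _).2 ⟨hinj, hcard⟩).2
  obtain ⟨m, hm⟩ := hsurj B
  exact ⟨m.1, m.2, hm⟩

lemma mem_neSubsets {n : ℕ} (B : {B : Finset (Fin n) // B.Nonempty}) :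
    B ∈ neSubsets n := by
  obtain ⟨m, hm, hB⟩ := natToFinset_surj B.1
  rw [neSubsets, List.mem_filterMap]
  refine ⟨B.1, ?_, ?_⟩
  · exact List.mem_map.2 ⟨m, List.mem_range.2 hm, hB⟩
  · rw [dif_pos B.2]

/-- One direction of the distributed-modality step. -/
lemma Dhalf {n : ℕ} {W W' : Type} {M : KModel n W} {M' : KModel n W'} {B : Finset (Fin n)}
    {s : W} {s' : W'} {ψ : Formula n} {l : List (Formula n)}
    (hall' : ∀ t', M'.RB B s' t' → Sat M' t' (bigOr l))
    (hex : ∀ χ ∈ l, ∃ t, M.RB B s t ∧ Sat M t χ)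
    (heq : ∀ χ ∈ l, ∀ (t : W) (t' : W'), Sat M t χ → Sat M' t' χ → (Sat M t ψ ↔ Sat M' t' ψ))
    (hs : ∀ t, M.RB B s t → Sat M t ψ) :
    ∀ t', M'.RB B s' t' → Sat M' t' ψ := by
  intro t' ht'
  obtain ⟨χ, hχl, hχ⟩ := sat_bigOr.1 (hall' t' ht')
  obtain ⟨t, htR, htχ⟩ := hex χ hχl
  exact (heq χ hχl t t' htχ hχ).1 (hs t htR)

/-- Two pointed models of the same d-canonical formula agree on all formulas of
bounded depth with atoms inside `P`. -/
lemma agree {n : ℕ} {W W' : Type} (M : KModel n W) (M' : KModel n W') (P : Finset ℕ) :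
    ∀ (k : ℕ) (d : CData n) (s : W) (s' : W'),
      Sat M s (toFormula P k d) → Sat M' s' (toFormula P k d) →
      ∀ φ : Formula n, φ.depth ≤ k → φ.atoms ⊆ P → (Sat M s φ ↔ Sat M' s' φ) := by
  intro k
  induction k with
  | zero =>
    intro d s s' hs hs' φ
    have h1 := sat_minterm (P := P) (S0 := d.S ∩ P) (by simpa [toFormula] using hs)
    have h2 := sat_minterm (P := P) (S0 := d.S ∩ P) (by simpa [toFormula] using hs')
    induction φ with
    | top => intro _ _; simp [Sat]
    | bot => intro _ _; simp [Sat]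
    | atom q =>
      intro _ hat
      have hq : q ∈ P := hat (by simp [Formula.atoms])
      simp only [Sat]
      rw [h1 q hq, h2 q hq]
    | neg φ ih =>
      intro hdep hat
      simp only [Sat]
      exact not_congr (ih hdep hat)
    | and φ ψ ihφ ihψ =>
      intro hdep hat
      rw [Formula.depth, Nat.max_le] at hdep
      rw [Formula.atoms, Finset.union_subset_iff] at hat
      simp only [Sat]
      exact and_congr (ihφ hdep.1 hat.1) (ihψ hdep.2 hat.2)
    | or φ ψ ihφ ihψ =>
      intro hdep hat
      rw [Formula.depth, Nat.max_le] at hdep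
      rw [Formula.atoms, Finset.union_subset_iff] at hat
      simp only [Sat]
      exact or_congr (ihφ hdep.1 hat.1) (ihψ hdep.2 hat.2)
    | D B ψ ih =>
      intro hdep _
      exact absurd hdep (by simp [Formula.depth])
  | succ k ihk =>
    intro d s s' hs hs'
    simp only [toFormula, Sat] at hs hs'
    obtain ⟨hm, hb⟩ := hs
    obtain ⟨hm', hb'⟩ := hs'
    have h1 := sat_minterm hm
    have h2 := sat_minterm hm'
    rw [sat_bigAnd] at hb hb'
    intro φ
    induction φ with
    | top => intro _ _; simp [Sat]
    | bot => intro _ _; simp [Sat]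
    | atom q =>
      intro _ hat
      have hq : q ∈ P := hat (by simp [Formula.atoms])
      simp only [Sat]
      rw [h1 q hq, h2 q hq]
    | neg φ ih =>
      intro hdep hat
      simp only [Sat]
      exact not_congr (ih hdep hat)
    | and φ ψ ihφ ihψ =>
      intro hdep hat
      rw [Formula.depth, Nat.max_le] at hdep
      rw [Formula.atoms, Finset.union_subset_iff] at hat
      simp only [Sat]
      exact and_congr (ihφ hdep.1 hat.1) (ihψ hdep.2 hat.2)
    | or φ ψ ihφ ihψ =>
      intro hdep hat
      rw [Formula.depth, Nat.max_le] at hdep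
      rw [Formula.atoms, Finset.union_subset_iff] at hat
      simp only [Sat]
      exact or_congr (ihφ hdep.1 hat.1) (ihψ hdep.2 hat.2)
    | D B ψ ih =>
      intro hdep hat
      have hdψ : ψ.depth ≤ k := by
        rw [Formula.depth] at hdep; omega
      have hatψ : ψ.atoms ⊆ P := hat
      have hBmem := mem_neSubsets B
      set Φ : List (Formula n) := normList ((d.succ B.1).map fun c => toFormula P k c) with hΦ
      have hnab : Sat M s (nabla B Φ) := hb _ (List.mem_map.2 ⟨B, hBmem, rfl⟩)
      have hnab' : Sat M' s' (nabla B Φ) := hb' _ (List.mem_map.2 ⟨B, hBmem, rfl⟩)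
      rw [nabla] at hnab hnab'
      simp only [Sat] at hnab hnab'
      obtain ⟨hD, hE⟩ := hnab
      obtain ⟨hD', hE'⟩ := hnab'
      rw [sat_bigAnd] at hE hE'
      have hex : ∀ χ ∈ Φ, ∃ t, M.RB B.1 s t ∧ Sat M t χ := by
        intro χ hχ
        have := hE _ (List.mem_map.2 ⟨χ, hχ, rfl⟩)
        simp only [Sat] at this
        push_neg at this
        obtain ⟨t, ht, htχ⟩ := this
        exact ⟨t, ht, htχ⟩
      have hex' : ∀ χ ∈ Φ, ∃ t', M'.RB B.1 s' t' ∧ Sat M' t' χ := by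
        intro χ hχ
        have := hE' _ (List.mem_map.2 ⟨χ, hχ, rfl⟩)
        simp only [Sat] at this
        push_neg at this
        obtain ⟨t, ht, htχ⟩ := this
        exact ⟨t, ht, htχ⟩
      have heq : ∀ χ ∈ Φ, ∀ (t : W) (t' : W'),
          Sat M t χ → Sat M' t' χ → (Sat M t ψ ↔ Sat M' t' ψ) := by
        intro χ hχ t t' htχ ht'χ
        obtain ⟨c, _, hc⟩ := List.mem_map.1 (mem_normList hχ)
        exact ihk c t t' (hc ▸ htχ) (hc ▸ ht'χ) ψ hdψ hatψ
      constructor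
      · intro hsψ
        exact Dhalf hD' hex heq hsψ
      · intro hsψ'
        exact Dhalf hD hex' (fun χ hχ t' t h1' h2' => (heq χ hχ t t' h2' h1').symm) hsψ'

/-- dichotomy for d-canonical formulas. -/
theorem canonical_dichotomy {n : ℕ} (L : MSys) (P : Finset ℕ) (k : ℕ)
    (δ : Formula n) (hδ : δ ∈ DP P k) (hsat : SatL L δ)
    (φ : Formula n) (hdep : φ.depth ≤ k) (hatoms : φ.atoms ⊆ P) :
    Entails L δ φ ∨ Entails L δ (Formula.neg φ) := by
  obtain ⟨d, rfl⟩ := hδ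
  obtain ⟨W0, M0, s0, _, hs0⟩ := hsat
  by_cases h : Sat M0 s0 φ
  · left
    intro W M _ s hsδ
    exact (agree M0 M P k d s0 s hs0 hsδ φ hdep hatoms).1 h
  · right
    intro W M _ s hsδ
    simp only [Sat]
    exact fun hc => h ((agree M M0 P k d s s0 hsδ hs0 φ hdep hatoms).1 hc)

end DKLogic
end
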